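/- arXiv:1810.11107 — 2 statements merged into one kernel-verified Lean document; each statement's English description precedes it below -/
import Mathlib

section
/- Let p≥1 and let f_0 = 1_{(0,1)} be the uniform density on (0,1). Assume K:ℝ→ℝ is a kernel (∫_ℝ K = 1) with Supp(K)⊆[−1,1] and that there exist 0<δ<1 and 0<γ<1 such that ∫_{−1}^a K(u)du ≤ 1−γ for every 0≤a≤δ. Then for any 0<h<(1+δ)^{−1}, the integrated bias of the convolution kernel estimator satisfies ‖E_{f_0}^n(f̂_h) − f_0‖_p ≥ δ^{1/p}·γ·h^{1/p}. -/
open MeasureTheory Real Filter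

noncomputable section

namespace Adaptive

/-- The measure on `ℝ` with Lebesgue density `f`. -/
def densMeasure1 (f : ℝ → ℝ) : Measure ℝ :=
  volume.withDensity fun x => ENNReal.ofReal (f x)

/-- The law of `n` i.i.d. observations with density `f`. -/
def prodLaw1 (n : ℕ) (f : ℝ → ℝ) : Measure (Fin n → ℝ) :=
  Measure.pi fun _ => densMeasure1 f

/-- `f` is a probability density on `[0,1]`. -/
def IsDensity01 (f : ℝ → ℝ) : Prop :=
  (∀ x, 0 ≤ f x) ∧ (∀ x, x ∉ Set.Icc (0:ℝ) 1 → f x = 0) ∧ (∫ x, f x) = 1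

/-- The convolution kernel estimator `f̂_h`. -/
def convEstimator (K : ℝ → ℝ) (h : ℝ) (n : ℕ) (X : Fin n → ℝ) (t : ℝ) : ℝ :=
  (1 / (n * h)) * ∑ j, K ((t - X j) / h)

/-- The `L_p([0,1])` norm, for a real exponent `p`. -/
def lpNorm1 (p : ℝ) (g : ℝ → ℝ) : ℝ :=
  (∫ t in Set.Icc (0:ℝ) 1, |g t| ^ p) ^ (1/p)

/-- The `L_p`–`L_q` risk of an estimator. -/
def risk1 (n : ℕ) (p q : ℝ) (est : (Fin n → ℝ) → ℝ → ℝ) (f : ℝ → ℝ) : ℝ :=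
  (∫ X, (lpNorm1 p fun t => est X t - f t) ^ q ∂prodLaw1 n f) ^ (1/q)

/-- The uniform density `f₀ = 1_{(0,1)}`. -/
def unifD : ℝ → ℝ := Set.indicator (Set.Ioo (0:ℝ) 1) 1

lemma densMeasure1_unif : densMeasure1 unifD = volume.restrict (Set.Ioo (0:ℝ) 1) := by
  unfold densMeasure1 unifD
  have h1 : (fun x => ENNReal.ofReal (Set.indicator (Set.Ioo (0:ℝ) 1) 1 x))
      = Set.indicator (Set.Ioo (0:ℝ) 1) 1 := by
    funext x
    by_cases hx : x ∈ Set.Ioo (0:ℝ) 1 <;> simp [hx]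
  rw [h1, withDensity_indicator_one measurableSet_Ioo]

instance : IsProbabilityMeasure (volume.restrict (Set.Ioo (0:ℝ) 1)) :=
  ⟨by simp [Real.volume_Ioo]⟩

lemma measurePreserving_eval_pi {n : ℕ} (μ : Measure ℝ) [IsProbabilityMeasure μ] (j : Fin n) :
    MeasurePreserving (Function.eval j) (Measure.pi fun _ : Fin n => μ) μ := by
  refine ⟨measurable_pi_apply j, ?_⟩
  ext s hs
  rw [Measure.map_apply (measurable_pi_apply j) hs, Set.eval_preimage, Measure.pi_pi]
  rw [Finset.prod_eq_single j]
  · simp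
  · intro i _ hij; simp [Function.update_of_ne hij]
  · simp

lemma mean_eq {K : ℝ → ℝ} (hKI : Integrable K volume) {h : ℝ} (hh : 0 < h)
    {n : ℕ} (hn : 1 ≤ n) (t : ℝ) :
    (∫ X, convEstimator K h n X t ∂prodLaw1 n unifD)
      = ∫ v in ((t-1)/h)..(t/h), K v := by
  set μ : Measure ℝ := volume.restrict (Set.Ioo (0:ℝ) 1) with hμ
  have hprod : prodLaw1 n unifD = Measure.pi fun _ : Fin n => μ := by
    rw [prodLaw1, densMeasure1_unif]
  -- integrability of fun x => K ((t - x) / h)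
  have hg : Integrable (fun x => K ((t - x) / h)) volume := by
    have h1 : Integrable (fun y => K (y * h⁻¹)) volume :=
      (integrable_comp_mul_right_iff K (inv_ne_zero hh.ne')).2 hKI
    have h2 : Integrable (fun x => K ((t - x) * h⁻¹)) volume := h1.comp_sub_left t
    simpa [div_eq_mul_inv] using h2
  have hgμ : Integrable (fun x => K ((t - x) / h)) μ := hg.restrict
  have hint : ∀ j : Fin n,
      Integrable (fun X : Fin n → ℝ => K ((t - X j) / h)) (Measure.pi fun _ : Fin n => μ) :=
    fun j => ((measurePreserving_eval_pi μ j).integrable_comp hgμ.aestronglyMeasurable).2 hgμ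
  have hev : ∀ j : Fin n,
      (∫ X, K ((t - X j) / h) ∂(Measure.pi fun _ : Fin n => μ))
        = ∫ x, K ((t - x) / h) ∂μ := by
    intro j
    have e := integral_map (μ := Measure.pi fun _ : Fin n => μ) (φ := Function.eval j)
      (measurable_pi_apply j).aemeasurable (f := fun x => K ((t - x) / h))
      (by rw [(measurePreserving_eval_pi μ j).map_eq]; exact hgμ.aestronglyMeasurable)
    rw [(measurePreserving_eval_pi μ j).map_eq] at e
    exact e.symm
  rw [hprod]
  unfold convEstimator
  rw [integral_const_mul, integral_finset_sum _ (fun j _ => hint j)]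
  simp_rw [hev]
  rw [Finset.sum_const, Finset.card_univ, Fintype.card_fin, nsmul_eq_mul]
  have hn0 : (n : ℝ) ≠ 0 := Nat.cast_ne_zero.2 (by omega)
  have key : (1/h) * (∫ x, K ((t - x) / h) ∂μ) = ∫ v in ((t-1)/h)..(t/h), K v := by
    have e1 : (∫ x, K ((t - x) / h) ∂μ) = ∫ x in (0:ℝ)..1, K ((t - x) / h) := by
      rw [hμ, intervalIntegral.integral_of_le zero_le_one, integral_Ioc_eq_integral_Ioo]
    rw [e1, intervalIntegral.integral_comp_sub_left (fun y => K (y / h)) t, sub_zero,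
      one_div, intervalIntegral.inv_mul_integral_comp_div]
  rw [← key]; field_simp


/-- lower bound on the integrated bias of the convolution kernel
estimator for the uniform density `f₀ = 1_{(0,1)}`. -/
theorem integrated_bias_lower_bound
    (n : ℕ) (hn : 1 ≤ n) (p : ℝ) (hp : 1 ≤ p)
    (K : ℝ → ℝ) (hKint : (∫ u, K u) = 1)
    (hKsupp : ∀ u, u ∉ Set.Icc (-1:ℝ) 1 → K u = 0)
    (δ γ : ℝ) (hδ : δ ∈ Set.Ioo (0:ℝ) 1) (hγ : γ ∈ Set.Ioo (0:ℝ) 1)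
    (hK : ∀ a : ℝ, 0 ≤ a → a ≤ δ → (∫ u in Set.Icc (-1:ℝ) a, K u) ≤ 1 - γ)
    (h : ℝ) (hh : 0 < h) (hh' : h < (1 + δ)⁻¹) :
    δ ^ (1/p) * γ * h ^ (1/p)
      ≤ lpNorm1 p
          (fun t => (∫ X, convEstimator K h n X t ∂prodLaw1 n unifD) - unifD t) := by
  have hp0 : (0:ℝ) < p := lt_of_lt_of_le one_pos hp
  have hp0' : (0:ℝ) ≤ 1/p := by positivity
  -- K is integrable
  have hKI : Integrable K volume := by
    by_contra hc
    rw [integral_undef hc] at hKint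
    norm_num at hKint
  -- basic bounds
  have h1δ : (0:ℝ) < 1 + δ := by linarith [hδ.1]
  have hh1 : h * (1 + δ) < 1 := by
    have := mul_lt_mul_of_pos_right hh' h1δ
    rwa [inv_mul_cancel₀ h1δ.ne'] at this
  have hδh : δ * h ≤ 1 - h := by nlinarith
  have hδh1 : δ * h < 1 := by nlinarith
  have hδh0 : 0 < δ * h := mul_pos hδ.1 hh
  -- the mean function
  set m : ℝ → ℝ := fun t => ∫ v in ((t-1)/h)..(t/h), K v with hm
  have hmean : ∀ t, (∫ X, convEstimator K h n X t ∂prodLaw1 n unifD) = m t :=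
    fun t => mean_eq hKI hh hn t
  set g : ℝ → ℝ := fun t => (∫ X, convEstimator K h n X t ∂prodLaw1 n unifD) - unifD t
    with hgdef
  have hg_eq : ∀ t, g t = m t - unifD t := fun t => by rw [hgdef]; simp [hmean t]
  -- m is continuous
  have hFc : Continuous fun s => ∫ v in (0:ℝ)..s, K v :=
    intervalIntegral.continuous_primitive (fun a b => hKI.intervalIntegrable) 0
  have hm_split : ∀ t, m t = (∫ v in (0:ℝ)..(t/h), K v) - ∫ v in (0:ℝ)..((t-1)/h), K v :=
    fun t => (intervalIntegral.integral_interval_sub_left hKI.intervalIntegrable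
      hKI.intervalIntegrable).symm
  have hmc : Continuous m := by
    have : Continuous fun t : ℝ => (∫ v in (0:ℝ)..(t/h), K v) - ∫ v in (0:ℝ)..((t-1)/h), K v :=
      (hFc.comp (continuous_id.div_const h)).sub
        (hFc.comp ((continuous_id.sub continuous_const).div_const h))
    exact this.congr fun t => (hm_split t).symm
  -- m is bounded
  set B : ℝ := ∫ u, |K u| with hB
  have hm_bd : ∀ t, |m t| ≤ B := by
    intro t
    have hab : (t-1)/h ≤ t/h := by
      apply div_le_div_of_nonneg_right (by linarith) hh.le
    calc |m t| ≤ ∫ v in ((t-1)/h)..(t/h), |K v| :=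
          intervalIntegral.abs_integral_le_integral_abs hab
      _ = ∫ v in Set.Ioc ((t-1)/h) (t/h), |K v| := intervalIntegral.integral_of_le hab
      _ ≤ B := setIntegral_le_integral hKI.abs (Eventually.of_forall fun x => abs_nonneg _)
  have hB0 : (0:ℝ) ≤ B := le_trans (abs_nonneg _) (hm_bd 0)
  -- g is measurable and bounded
  have hunifDm : Measurable unifD := measurable_one.indicator measurableSet_Ioo
  have hgm : Measurable g := by
    have h1 : Measurable fun t => m t - unifD t := hmc.measurable.sub hunifDm
    have h2 : g = fun t => m t - unifD t := funext hg_eq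
    rw [h2]; exact h1
  have hg_bd : ∀ t, |g t| ≤ B + 1 := by
    intro t
    rw [hg_eq t]
    have h1 : |unifD t| ≤ 1 := by
      unfold unifD
      by_cases ht : t ∈ Set.Ioo (0:ℝ) 1 <;> simp [ht]
    calc |m t - unifD t| ≤ |m t| + |unifD t| := abs_sub _ _
      _ ≤ B + 1 := add_le_add (hm_bd t) h1
  -- integrability of |g|^p on Icc 0 1
  have hgpm : Measurable fun t => |g t| ^ p :=
    (Real.continuous_rpow_const hp0.le).measurable.comp hgm.abs
  have hgp_int : IntegrableOn (fun t => |g t| ^ p) (Set.Icc (0:ℝ) 1) volume := by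
    refine Integrable.mono' (integrable_const ((B+1) ^ p))
      hgpm.aestronglyMeasurable (Eventually.of_forall fun t => ?_)
    rw [Real.norm_of_nonneg (Real.rpow_nonneg (abs_nonneg _) _)]
    exact Real.rpow_le_rpow (abs_nonneg _) (hg_bd t) hp0.le
  -- pointwise lower bound on Ioc 0 (δ*h)
  have hpt : ∀ t ∈ Set.Ioc (0:ℝ) (δ*h), γ ≤ |g t| := by
    intro t ht
    have ht0 : 0 < t := ht.1
    have htδ : t ≤ δ * h := ht.2
    have ht1 : t < 1 := lt_of_le_of_lt htδ hδh1
    have hu1 : unifD t = 1 := by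
      unfold unifD
      simp [Set.mem_Ioo.2 ⟨ht0, ht1⟩]
    -- bound m t
    have ha : (t-1)/h ≤ -1 := by
      rw [div_le_iff₀ hh]
      nlinarith
    have h1 : (∫ v in ((t-1)/h)..(-1:ℝ), K v) = 0 := by
      rw [intervalIntegral.integral_of_le ha, integral_Ioc_eq_integral_Ioo]
      rw [setIntegral_congr_fun measurableSet_Ioo
        (g := fun _ => (0:ℝ)) (fun x hx => hKsupp x (by
          simp only [Set.mem_Icc, not_and_or, not_le]
          exact Or.inl hx.2))]
      simp
    have h2 : (∫ v in (-1:ℝ)..(t/h), K v) ≤ 1 - γ := by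
      have hth : (0:ℝ) ≤ t/h := le_of_lt (div_pos ht0 hh)
      have htδ' : t/h ≤ δ := by
        rw [div_le_iff₀ hh]; linarith [htδ]
      rw [intervalIntegral.integral_of_le (by linarith : (-1:ℝ) ≤ t/h),
        ← integral_Icc_eq_integral_Ioc]
      exact hK (t/h) hth htδ'
    have hmle : m t ≤ 1 - γ := by
      have := intervalIntegral.integral_add_adjacent_intervals
        (a := (t-1)/h) (b := (-1:ℝ)) (c := t/h)
        hKI.intervalIntegrable hKI.intervalIntegrable
      rw [hm]
      simp only
      rw [← this, h1, zero_add]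
      exact h2
    rw [hg_eq t, hu1]
    calc γ ≤ 1 - m t := by linarith
      _ ≤ |m t - 1| := by rw [abs_sub_comm]; exact le_abs_self _
  -- assemble
  have hsub : Set.Ioc (0:ℝ) (δ*h) ⊆ Set.Icc (0:ℝ) 1 :=
    fun x hx => ⟨le_of_lt hx.1, le_trans hx.2 (le_of_lt hδh1)⟩
  have I1 : (δ*h) * γ ^ p ≤ ∫ t in Set.Ioc (0:ℝ) (δ*h), |g t| ^ p := by
    have hconst : (∫ _ in Set.Ioc (0:ℝ) (δ*h), γ ^ p) = (δ*h) * γ ^ p := by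
      rw [setIntegral_const, measureReal_def, Real.volume_Ioc, sub_zero,
        ENNReal.toReal_ofReal hδh0.le, smul_eq_mul]
    rw [← hconst]
    refine setIntegral_mono_on (integrableOn_const (by
      rw [Real.volume_Ioc]; exact ENNReal.ofReal_ne_top))
      (hgp_int.mono_set hsub) measurableSet_Ioc (fun t ht => ?_)
    exact Real.rpow_le_rpow hγ.1.le (hpt t ht) hp0.le
  have I2 : (∫ t in Set.Ioc (0:ℝ) (δ*h), |g t| ^ p)
      ≤ ∫ t in Set.Icc (0:ℝ) 1, |g t| ^ p :=
    setIntegral_mono_set hgp_int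
      (Eventually.of_forall fun t => Real.rpow_nonneg (abs_nonneg _) _)
      (HasSubset.Subset.eventuallyLE hsub)
  have key : ((δ*h) * γ ^ p) ^ (1/p) = δ ^ (1/p) * γ * h ^ (1/p) := by
    have hγp : (γ ^ p) ^ (1/p) = γ := by
      rw [← Real.rpow_mul hγ.1.le, mul_one_div_cancel hp0.ne', Real.rpow_one]
    rw [Real.mul_rpow (by positivity) (Real.rpow_nonneg hγ.1.le _),
      Real.mul_rpow hδ.1.le hh.le, hγp]
    ring
  rw [lpNorm1, ← key]
  exact Real.rpow_le_rpow (mul_nonneg hδh0.le (Real.rpow_nonneg hγ.1.le _))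
    (le_trans I1 I2) hp0'


end Adaptive
end
end

section
/- L_2-optimality of the Legendre kernels: for every m∈ℕ*, w_m minimizes the L_2([0,1]) norm among all kernels of order m; that is, for every w∈𝒲 of order m, (∫_0^1 w(u)² du)^{1/2} ≥ (∫_0^1 w_m(u)² du)^{1/2} = m+1. -/
open MeasureTheory Real Filter

noncomputable section

namespace Adaptive

/-- The class `𝒲` of bounded univariate kernels supported in `[0,1]`. -/
def MemW (W : ℝ → ℝ) : Prop :=
  (∃ C, ∀ u ∈ Set.Icc (0:ℝ) 1, |W u| ≤ C) ∧
  (∀ u, u ∉ Set.Icc (0:ℝ) 1 → W u = 0) ∧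
  (∫ u in Set.Icc (0:ℝ) 1, W u) = 1

/-- A kernel of order `m`. -/
def OfOrder (W : ℝ → ℝ) (m : ℕ) : Prop :=
  ∀ r : ℕ, 1 ≤ r → r ≤ m → (∫ u in Set.Icc (0:ℝ) 1, W u * u ^ r) = 0

/-- Legendre polynomial of degree `k` on `[−1,1]` (Rodrigues formula, `Q_k(1)=1`). -/
def legendreP (k : ℕ) (x : ℝ) : ℝ :=
  (1 / (2 ^ k * (k.factorial : ℝ))) * iteratedDeriv k (fun y => (y ^ 2 - 1) ^ k) x

/-- `φ_k(u) = √(2k+1)·Q_k(2u−1)`. -/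
def phiLeg (k : ℕ) (u : ℝ) : ℝ := Real.sqrt (2 * k + 1) * legendreP k (2 * u - 1)

/-- The Legendre kernel `w_m`. -/
def wKernel (m : ℕ) (u : ℝ) : ℝ :=
  if u ∈ Set.Icc (0:ℝ) 1 then ∑ r ∈ Finset.range (m + 1), phiLeg r 0 * phiLeg r u else 0

/-- The Hilbert matrix of order `m+1`, with entries `1/(i+j−1)` for `1 ≤ i,j ≤ m+1`
(zero-indexed: `1/(i+j+1)`). -/
def hilbertMatrix (m : ℕ) : Matrix (Fin (m+1)) (Fin (m+1)) ℝ :=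
  Matrix.of fun i j => 1 / ((i : ℝ) + (j : ℝ) + 1)

/-- The vector `e₀ = (1,0,…,0)ᵀ ∈ ℝ^{m+1}`. -/
def e0vec (m : ℕ) : Fin (m+1) → ℝ := fun i => if i = 0 then 1 else 0

open Polynomial

/-- shifted weight polynomial `(X(X-1))^k`. -/
def hP (k : ℕ) : Polynomial ℝ := (X * (X - 1)) ^ k

/-- shifted Legendre polynomial. -/
def LP (k : ℕ) : Polynomial ℝ :=
  C ((k.factorial : ℝ))⁻¹ * derivative^[k] (hP k)

lemma hP_monic (k : ℕ) : (hP k).Monic :=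
  ((monic_X).mul (by simpa using monic_X_sub_C (1:ℝ))).pow k

lemma hP_natDegree (k : ℕ) : (hP k).natDegree = 2 * k := by
  have h1 : (X * (X - 1) : Polynomial ℝ).natDegree = 2 := by
    rw [natDegree_mul X_ne_zero (by simpa using (monic_X_sub_C (1:ℝ)).ne_zero)]
    have : (X - 1 : Polynomial ℝ) = X - C 1 := by simp
    simp [this, natDegree_X_sub_C]
  rw [hP, natDegree_pow, h1]; ring

lemma hP_eq (k : ℕ) : hP k = X ^ k * (X - 1) ^ k := by rw [hP, mul_pow]

lemma hP_coeff_self (k : ℕ) : (hP k).coeff k = (-1) ^ k := by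
  rw [hP_eq]
  have := coeff_X_pow_mul ((X - 1 : Polynomial ℝ) ^ k) k 0
  rw [zero_add] at this
  rw [this, coeff_zero_eq_eval_zero]
  simp

lemma hP_coeff_lt (k j : ℕ) (h : j < k) : (hP k).coeff j = 0 := by
  rw [hP_eq, mul_comm, coeff_mul_X_pow']
  simp [Nat.not_le.mpr h]

lemma hP_deriv_eval_zero (k j : ℕ) (h : j < k) :
    (derivative^[j] (hP k)).eval 0 = 0 := by
  rw [← coeff_zero_eq_eval_zero, coeff_iterate_derivative, zero_add,
    hP_coeff_lt k j h, smul_zero]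

lemma hP_comp_one_sub (k : ℕ) : (hP k).comp (1 - X) = hP k := by
  rw [hP, pow_comp]
  congr 1
  simp only [mul_comp, sub_comp, one_comp, X_comp]
  ring

lemma hP_deriv_eval_one (k j : ℕ) (h : j < k) :
    (derivative^[j] (hP k)).eval 1 = 0 := by
  have h2 := iterate_derivative_comp_one_sub_X (hP k) j
  rw [hP_comp_one_sub] at h2
  have h3 := congrArg (eval (1:ℝ)) h2
  simp only [eval_mul, eval_pow, eval_neg, eval_one, eval_comp, eval_sub, eval_X] at h3
  rw [sub_self] at h3
  have h4 := hP_deriv_eval_zero k j h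
  rw [h3, h4, mul_zero]

lemma hP_deriv_self_eval_zero (k : ℕ) :
    (derivative^[k] (hP k)).eval 0 = (k.factorial : ℝ) * (-1) ^ k := by
  rw [← coeff_zero_eq_eval_zero, coeff_iterate_derivative, zero_add,
    hP_coeff_self, Nat.descFactorial_self, nsmul_eq_mul]

lemma LP_eval_zero (k : ℕ) : (LP k).eval 0 = (-1) ^ k := by
  rw [LP, eval_mul, eval_C, hP_deriv_self_eval_zero]
  field_simp

lemma LP_natDegree_le (k : ℕ) : (LP k).natDegree ≤ k := by
  refine (natDegree_C_mul_le _ _).trans ?_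
  refine (natDegree_iterate_derivative _ _).trans ?_
  rw [hP_natDegree]; omega

lemma hP_deriv_two_k (k : ℕ) :
    derivative^[2 * k] (hP k) = C (((2 * k).factorial : ℝ)) := by
  have hdeg : (derivative^[2 * k] (hP k)).natDegree = 0 := by
    have := natDegree_iterate_derivative (hP k) (2 * k)
    rw [hP_natDegree] at this; omega
  have := Polynomial.eq_C_of_natDegree_le_zero hdeg.le
  rw [this, coeff_iterate_derivative, zero_add, ← hP_natDegree k]
  rw [Nat.descFactorial_self, (hP_monic k).coeff_natDegree, nsmul_eq_mul, mul_one]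


lemma iteratedDeriv_eval (p : Polynomial ℝ) (n : ℕ) :
    iteratedDeriv n (fun x => p.eval x) = fun x => (derivative^[n] p).eval x := by
  induction n with
  | zero => simp
  | succ n ih =>
      rw [iteratedDeriv_succ, ih, Function.iterate_succ_apply']
      funext x
      exact Polynomial.deriv _

/-- the affine substitution `2X - 1`. -/
def qs : Polynomial ℝ := C 2 * X - C 1

lemma qs_eval (u : ℝ) : qs.eval u = 2 * u - 1 := by simp [qs]

lemma iterate_derivative_comp_qs (p : Polynomial ℝ) (n : ℕ) :
    derivative^[n] (p.comp qs) = C ((2:ℝ) ^ n) * (derivative^[n] p).comp qs := by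
  induction n generalizing p with
  | zero => simp
  | succ n ih =>
      rw [Function.iterate_succ_apply, Function.iterate_succ_apply]
      have h1 : derivative (p.comp qs) = (C (2:ℝ) * derivative p).comp qs := by
        rw [derivative_comp, mul_comp, C_comp]
        have : derivative qs = C (2:ℝ) := by simp [qs]
        rw [this]
      rw [h1, ih, iterate_derivative_C_mul, mul_comp, C_comp, ← mul_assoc, ← C_mul]
      ring_nf

lemma base_comp_qs (k : ℕ) :
    (((X:Polynomial ℝ) ^ 2 - 1) ^ k).comp qs = C ((4:ℝ) ^ k) * hP k := by
  rw [pow_comp, hP, C_pow, ← mul_pow]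
  congr 1
  simp only [sub_comp, pow_comp, X_comp, one_comp, qs, map_ofNat, C_1]
  ring

lemma legendreP_eq_LP (k : ℕ) (u : ℝ) :
    legendreP k (2 * u - 1) = (LP k).eval u := by
  have hfun : (fun y : ℝ => (y ^ 2 - 1) ^ k)
      = fun y => (((X:Polynomial ℝ) ^ 2 - 1) ^ k).eval y := by
    funext y; simp
  have h1 : iteratedDeriv k (fun y : ℝ => (y ^ 2 - 1) ^ k) (2 * u - 1)
      = (derivative^[k] (((X:Polynomial ℝ) ^ 2 - 1) ^ k)).eval (qs.eval u) := by
    rw [hfun, iteratedDeriv_eval, qs_eval]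
  have h2 : (derivative^[k] (((X:Polynomial ℝ) ^ 2 - 1) ^ k)).eval (qs.eval u)
      = ((derivative^[k] (((X:Polynomial ℝ) ^ 2 - 1) ^ k)).comp qs).eval u := by
    rw [eval_comp]
  have h3 := iterate_derivative_comp_qs (((X:Polynomial ℝ) ^ 2 - 1) ^ k) k
  rw [base_comp_qs, iterate_derivative_C_mul] at h3
  -- h3 : C (4^k) * derivative^[k] (hP k) = C (2^k) * (derivative^[k] _).comp qs
  have h4 : ((derivative^[k] (((X:Polynomial ℝ) ^ 2 - 1) ^ k)).comp qs)
      = C ((2:ℝ) ^ k) * derivative^[k] (hP k) := by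
    have h2k : ((2:ℝ) ^ k) ≠ 0 := by positivity
    have := congrArg (fun p => C ((2:ℝ) ^ k)⁻¹ * p) h3.symm
    rw [← mul_assoc, ← C_mul, inv_mul_cancel₀ h2k, C_1, one_mul] at this
    rw [this, ← mul_assoc, ← C_mul]
    congr 2
    rw [show (4:ℝ) = 2 * 2 by norm_num, mul_pow]
    field_simp
  rw [legendreP, h1, h2, h4, LP]
  simp only [eval_mul, eval_C]
  have hk : ((k.factorial : ℝ)) ≠ 0 := Nat.cast_ne_zero.mpr k.factorial_ne_zero
  have h2k : ((2:ℝ) ^ k) ≠ 0 := by positivity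
  field_simp


lemma polyIntervalIntegrable (p : Polynomial ℝ) (a b : ℝ) :
    IntervalIntegrable (fun x => p.eval x) volume a b :=
  (p.continuous_aeval).intervalIntegrable _ _

/-- fundamental theorem of calculus for polynomials on `[0,1]`. -/
lemma poly_ftc (p : Polynomial ℝ) :
    ∫ x in (0:ℝ)..1, (derivative p).eval x = p.eval 1 - p.eval 0 := by
  have h := intervalIntegral.integral_deriv_eq_sub
    (f := fun x => p.eval x) (a := (0:ℝ)) (b := 1)
    (fun x _ => p.differentiableAt) ?_
  · rw [← h]
    refine intervalIntegral.integral_congr fun x _ => ?_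
    exact (Polynomial.deriv _).symm
  · have : (deriv fun x => p.eval x) = fun x => (derivative p).eval x := by
      funext x; exact Polynomial.deriv _
    rw [this]; exact polyIntervalIntegrable _ _ _

/-- integration by parts for polynomials on `[0,1]`. -/
lemma poly_ibp (p q : Polynomial ℝ) :
    ∫ x in (0:ℝ)..1, p.eval x * (derivative q).eval x
      = p.eval 1 * q.eval 1 - p.eval 0 * q.eval 0
        - ∫ x in (0:ℝ)..1, (derivative p).eval x * q.eval x := by
  have h := poly_ftc (p * q)
  rw [derivative_mul] at h
  have hsplit : ∫ x in (0:ℝ)..1, (derivative p * q + p * derivative q).eval x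
      = (∫ x in (0:ℝ)..1, (derivative p).eval x * q.eval x)
        + ∫ x in (0:ℝ)..1, p.eval x * (derivative q).eval x := by
    rw [← intervalIntegral.integral_add (polyIntervalIntegrable (derivative p * q) 0 1 |>.congr ?_)
      ((polyIntervalIntegrable (p * derivative q) 0 1).congr ?_)]
    · refine intervalIntegral.integral_congr fun x _ => ?_
      simp [eval_add, eval_mul]
    · exact fun x _ => by simp [eval_mul]
    · exact fun x _ => by simp [eval_mul]
  rw [hsplit] at h
  simp only [eval_mul] at h
  linarith

/-- iterated integration by parts against `hP k`. -/
lemma key_aux (k : ℕ) (q : Polynomial ℝ) :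
    ∀ j, j ≤ k →
      (∫ x in (0:ℝ)..1, q.eval x * (derivative^[k] (hP k)).eval x)
        = (-1) ^ j * ∫ x in (0:ℝ)..1,
            (derivative^[j] q).eval x * (derivative^[k - j] (hP k)).eval x := by
  intro j
  induction j with
  | zero => simp
  | succ j ih =>
      intro hj
      rw [ih (by omega)]
      have hkj : k - j = (k - (j + 1)) + 1 := by omega
      rw [hkj, Function.iterate_succ_apply']
      rw [poly_ibp (derivative^[j] q) (derivative^[k - (j+1)] (hP k))]
      rw [hP_deriv_eval_zero k _ (by omega), hP_deriv_eval_one k _ (by omega)]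
      rw [← Function.iterate_succ_apply' derivative]
      ring

lemma key (k : ℕ) (q : Polynomial ℝ) :
    (∫ x in (0:ℝ)..1, q.eval x * (derivative^[k] (hP k)).eval x)
      = (-1) ^ k * ∫ x in (0:ℝ)..1, (derivative^[k] q).eval x * (hP k).eval x := by
  simpa using key_aux k q k le_rfl

/-- the Beta-type integral. -/
lemma beta_int : ∀ b a : ℕ, (∫ x in (0:ℝ)..1, x ^ a * (x - 1) ^ b)
    = (-1) ^ b * (a.factorial : ℝ) * (b.factorial : ℝ) / ((a + b + 1).factorial : ℝ) := by
  intro b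
  induction b with
  | zero =>
      intro a
      simp only [pow_zero, mul_one, Nat.factorial]
      rw [integral_pow]
      have h1 : ((a+1).factorial : ℝ) = ((a:ℝ)+1) * a.factorial := by
        rw [Nat.factorial_succ]; push_cast; ring
      have h2 : (a.factorial : ℝ) ≠ 0 := Nat.cast_ne_zero.mpr a.factorial_ne_zero
      have h3 : ((a:ℝ)+1) ≠ 0 := by positivity
      rw [one_pow, zero_pow (by omega)]
      push_cast [Nat.factorial_succ]
      field_simp
      norm_num
  | succ b ih =>
      intro a
      have hibp := poly_ibp ((X - 1 : Polynomial ℝ) ^ (b + 1)) (C ((a+1:ℝ))⁻¹ * X ^ (a + 1))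
      have hdq : derivative (C ((a+1:ℝ))⁻¹ * X ^ (a + 1)) = C ((a+1:ℝ))⁻¹ * (C ((a:ℝ)+1) * X ^ a) := by
        rw [derivative_C_mul, derivative_X_pow]
        push_cast
        ring_nf
      have hdp : derivative ((X - 1 : Polynomial ℝ) ^ (b + 1))
          = C ((b:ℝ)+1) * (X - 1) ^ b := by
        rw [derivative_pow]
        simp

      have h3 : ((a:ℝ)+1) ≠ 0 := by positivity
      have e1 : (∫ x in (0:ℝ)..1, x ^ a * (x - 1) ^ (b+1))
          = ∫ x in (0:ℝ)..1, ((X - 1 : Polynomial ℝ) ^ (b + 1)).eval x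
              * (derivative (C ((a+1:ℝ))⁻¹ * X ^ (a + 1))).eval x := by
        refine intervalIntegral.integral_congr fun x _ => ?_
        rw [hdq]
        simp only [eval_mul, eval_C, eval_pow, eval_sub, eval_X, eval_one]
        field_simp
      have e2 : (∫ x in (0:ℝ)..1,
            (derivative ((X - 1 : Polynomial ℝ) ^ (b + 1))).eval x
              * (C ((a+1:ℝ))⁻¹ * X ^ (a + 1)).eval x)
          = ((b:ℝ)+1) * ((a:ℝ)+1)⁻¹ * ∫ x in (0:ℝ)..1, x ^ (a+1) * (x - 1) ^ b := by
        rw [← intervalIntegral.integral_const_mul]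
        refine intervalIntegral.integral_congr fun x _ => ?_
        rw [hdp]
        simp only [eval_mul, eval_C, eval_pow, eval_sub, eval_X, eval_one]
        push_cast
        ring
      rw [e1, hibp, e2, ih (a+1)]
      simp only [eval_pow, eval_sub, eval_one, eval_X, eval_mul, eval_C, sub_self,
        zero_pow (Nat.succ_ne_zero b), zero_mul, mul_zero, zero_sub, zero_pow
        (Nat.succ_ne_zero a), sub_zero]
      have hfac : ((a + 1 + b + 1).factorial : ℝ) = ((a + (b+1) + 1).factorial : ℝ) := by
        rw [show a + 1 + b + 1 = a + (b+1) + 1 from by omega]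
      rw [hfac]
      have h4 : ((a + (b+1) + 1).factorial : ℝ) ≠ 0 := Nat.cast_ne_zero.mpr (Nat.factorial_ne_zero _)
      push_cast [Nat.factorial_succ]
      field_simp
      ring

lemma LP_mul_integral (k : ℕ) (q : Polynomial ℝ) :
    (∫ x in (0:ℝ)..1, q.eval x * (LP k).eval x)
      = ((k.factorial : ℝ))⁻¹ * (-1) ^ k
          * ∫ x in (0:ℝ)..1, (derivative^[k] q).eval x * (hP k).eval x := by
  have e1 : (∫ x in (0:ℝ)..1, q.eval x * (LP k).eval x)
      = ((k.factorial : ℝ))⁻¹ * ∫ x in (0:ℝ)..1, q.eval x * (derivative^[k] (hP k)).eval x := by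
    rw [← intervalIntegral.integral_const_mul]
    refine intervalIntegral.integral_congr fun x _ => ?_
    simp only [LP, eval_mul, eval_C]
    ring
  rw [e1, key, mul_assoc]

lemma LP_ortho_lt (j k : ℕ) (h : j < k) :
    (∫ x in (0:ℝ)..1, (LP j).eval x * (LP k).eval x) = 0 := by
  rw [LP_mul_integral]
  have : derivative^[k] (LP j) = 0 :=
    iterate_derivative_eq_zero (lt_of_le_of_lt (LP_natDegree_le j) h)
  rw [this]
  simp

lemma LP_norm (k : ℕ) :
    (∫ x in (0:ℝ)..1, (LP k).eval x * (LP k).eval x) = (2 * (k:ℝ) + 1)⁻¹ := by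
  rw [LP_mul_integral]
  have hd : derivative^[k] (LP k) = C ((k.factorial : ℝ))⁻¹ * C (((2 * k).factorial : ℝ)) := by
    rw [LP, iterate_derivative_C_mul, ← Function.iterate_add_apply, ← two_mul,
      hP_deriv_two_k]
  rw [hd]
  have e2 : (∫ x in (0:ℝ)..1,
        (C ((k.factorial : ℝ))⁻¹ * C (((2 * k).factorial : ℝ))).eval x * (hP k).eval x)
      = ((k.factorial : ℝ))⁻¹ * (((2 * k).factorial : ℝ))
          * ∫ x in (0:ℝ)..1, x ^ k * (x - 1) ^ k := by
    rw [← intervalIntegral.integral_const_mul]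
    refine intervalIntegral.integral_congr fun x _ => ?_
    simp only [eval_mul, eval_C, hP_eq, eval_pow, eval_sub, eval_X, eval_one]
  rw [e2, beta_int k k]
  have h1 : ((k + k + 1).factorial : ℝ) = (2 * (k:ℝ) + 1) * ((2 * k).factorial : ℝ) := by
    rw [show k + k + 1 = (2 * k) + 1 from by omega, Nat.factorial_succ]
    push_cast
    ring
  rw [h1]
  have h2 : (k.factorial : ℝ) ≠ 0 := Nat.cast_ne_zero.mpr k.factorial_ne_zero
  have h3 : ((2 * k).factorial : ℝ) ≠ 0 := Nat.cast_ne_zero.mpr (Nat.factorial_ne_zero _)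
  have h4 : (2 * (k:ℝ) + 1) ≠ 0 := by positivity
  have key2 : ((-1:ℝ)) ^ k * (-1:ℝ) ^ k = 1 := by
    rw [← pow_add, ← two_mul, pow_mul]; norm_num
  have e3 : (((2*k).factorial : ℝ)) / ((2 * (k:ℝ) + 1) * (((2*k).factorial : ℝ))) = (2*(k:ℝ)+1)⁻¹ := by
    rw [mul_comm (2*(k:ℝ)+1) _, ← div_div, div_self h3, one_div]
  calc ((k.factorial : ℝ))⁻¹ * (-1) ^ k
        * (((k.factorial : ℝ))⁻¹ * (((2 * k).factorial : ℝ))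
          * ((-1) ^ k * (k.factorial : ℝ) * (k.factorial : ℝ)
              / ((2 * (k:ℝ) + 1) * (((2 * k).factorial : ℝ)))))
      = (((-1:ℝ)) ^ k * (-1:ℝ) ^ k) * (((k.factorial : ℝ))⁻¹ * (k.factorial : ℝ))
          * (((k.factorial : ℝ))⁻¹ * (k.factorial : ℝ))
          * ((((2*k).factorial : ℝ)) / ((2 * (k:ℝ) + 1) * (((2*k).factorial : ℝ)))) := by
        ring
    _ = (2*(k:ℝ)+1)⁻¹ := by
        rw [key2, inv_mul_cancel₀ h2, e3]
        ring

/-- The projection-kernel polynomial. -/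
def PK (m : ℕ) : Polynomial ℝ :=
  ∑ k ∈ Finset.range (m + 1), C ((-1:ℝ) ^ k * (2 * k + 1)) * LP k

lemma phiLeg_eq (k : ℕ) (u : ℝ) : phiLeg k u = Real.sqrt (2 * k + 1) * (LP k).eval u := by
  rw [phiLeg, legendreP_eq_LP]

lemma phiLeg_mul (k : ℕ) (u : ℝ) :
    phiLeg k 0 * phiLeg k u = (2 * (k:ℝ) + 1) * ((-1:ℝ) ^ k * (LP k).eval u) := by
  rw [phiLeg_eq, phiLeg_eq, LP_eval_zero]
  have h : Real.sqrt (2 * k + 1) * Real.sqrt (2 * k + 1) = 2 * (k:ℝ) + 1 :=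
    Real.mul_self_sqrt (by positivity)
  calc Real.sqrt (2 * k + 1) * (-1:ℝ) ^ k * (Real.sqrt (2 * k + 1) * (LP k).eval u)
      = (Real.sqrt (2 * k + 1) * Real.sqrt (2 * k + 1)) * ((-1:ℝ) ^ k * (LP k).eval u) := by
        ring
    _ = _ := by rw [h]

lemma wKernel_eq (m : ℕ) {u : ℝ} (hu : u ∈ Set.Icc (0:ℝ) 1) :
    wKernel m u = (PK m).eval u := by
  rw [wKernel, if_pos hu, PK, eval_finset_sum]
  refine Finset.sum_congr rfl fun k _ => ?_
  rw [phiLeg_mul, eval_mul, eval_C]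
  ring

lemma PK_natDegree_lt (m : ℕ) : (PK m).natDegree < m + 1 := by
  have : (PK m).natDegree ≤ m := by
    refine natDegree_sum_le_of_forall_le _ _ fun k hk => ?_
    refine (natDegree_C_mul_le _ _).trans ((LP_natDegree_le k).trans ?_)
    exact Nat.lt_succ_iff.mp (Finset.mem_range.mp hk)
  omega

lemma sum_odds (n : ℕ) : (∑ k ∈ Finset.range n, (2 * (k:ℝ) + 1)) = (n:ℝ) ^ 2 := by
  induction n with
  | zero => simp
  | succ n ih => rw [Finset.sum_range_succ, ih]; push_cast; ring

lemma PK_eval_zero (m : ℕ) : (PK m).eval 0 = ((m:ℝ) + 1) ^ 2 := by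
  rw [PK, eval_finset_sum]
  have : ∀ k ∈ Finset.range (m+1),
      (C ((-1:ℝ) ^ k * (2 * k + 1)) * LP k).eval 0 = 2 * (k:ℝ) + 1 := by
    intro k _
    rw [eval_mul, eval_C, LP_eval_zero]
    have h1 : ((-1:ℝ)) ^ k * (-1:ℝ) ^ k = 1 := by
      rw [← pow_add, ← two_mul, pow_mul]; norm_num
    calc (-1:ℝ) ^ k * (2 * k + 1) * (-1:ℝ) ^ k
        = ((-1:ℝ) ^ k * (-1:ℝ) ^ k) * (2 * k + 1) := by ring
      _ = 2 * (k:ℝ) + 1 := by rw [h1]; ring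
  rw [Finset.sum_congr rfl this, sum_odds]
  push_cast
  ring

lemma LP_ortho (j k : ℕ) :
    (∫ x in (0:ℝ)..1, (LP j).eval x * (LP k).eval x)
      = if j = k then (2 * (k:ℝ) + 1)⁻¹ else 0 := by
  rcases lt_trichotomy j k with h | h | h
  · rw [if_neg h.ne, LP_ortho_lt j k h]
  · rw [if_pos h, h, LP_norm]
  · rw [if_neg h.ne']
    rw [show (∫ x in (0:ℝ)..1, (LP j).eval x * (LP k).eval x)
        = ∫ x in (0:ℝ)..1, (LP k).eval x * (LP j).eval x from
      intervalIntegral.integral_congr fun x _ => mul_comm _ _]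
    exact LP_ortho_lt k j h

lemma PK_sq_integral (m : ℕ) :
    (∫ x in (0:ℝ)..1, (PK m).eval x * (PK m).eval x) = ((m:ℝ) + 1) ^ 2 := by
  have hrw : ∀ x : ℝ, (PK m).eval x * (PK m).eval x
      = ∑ j ∈ Finset.range (m+1), ∑ k ∈ Finset.range (m+1),
          (((-1:ℝ) ^ j * (2 * j + 1)) * ((-1:ℝ) ^ k * (2 * k + 1)))
            * ((LP j).eval x * (LP k).eval x) := by
    intro x
    rw [PK, eval_finset_sum, Finset.sum_mul_sum]
    refine Finset.sum_congr rfl fun j _ => Finset.sum_congr rfl fun k _ => ?_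
    rw [eval_mul, eval_C, eval_mul, eval_C]
    ring
  rw [intervalIntegral.integral_congr (fun x _ => hrw x)]
  rw [intervalIntegral.integral_finset_sum]
  swap
  · intro j _
    apply Continuous.intervalIntegrable
    exact continuous_finset_sum _ fun k _ =>
      continuous_const.mul (((LP j).continuous).mul ((LP k).continuous))
  have : ∀ j ∈ Finset.range (m+1),
      (∫ x in (0:ℝ)..1, ∑ k ∈ Finset.range (m+1),
          (((-1:ℝ) ^ j * (2 * j + 1)) * ((-1:ℝ) ^ k * (2 * k + 1)))
            * ((LP j).eval x * (LP k).eval x)) = 2 * (j:ℝ) + 1 := by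
    intro j hj
    rw [intervalIntegral.integral_finset_sum]
    swap
    · intro k _
      exact (continuous_const.mul
        (((LP j).continuous).mul ((LP k).continuous))).intervalIntegrable _ _
    have e1 : ∀ k ∈ Finset.range (m+1),
        (∫ x in (0:ℝ)..1,
            (((-1:ℝ) ^ j * (2 * j + 1)) * ((-1:ℝ) ^ k * (2 * k + 1)))
              * ((LP j).eval x * (LP k).eval x))
          = (((-1:ℝ) ^ j * (2 * j + 1)) * ((-1:ℝ) ^ k * (2 * k + 1)))
              * if j = k then (2 * (k:ℝ) + 1)⁻¹ else 0 := by
      intro k _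
      rw [intervalIntegral.integral_const_mul, LP_ortho]
    rw [Finset.sum_congr rfl e1]
    simp only [mul_ite, mul_zero]
    rw [Finset.sum_ite_eq, if_pos hj]
    have h1 : ((-1:ℝ)) ^ j * (-1:ℝ) ^ j = 1 := by
      rw [← pow_add, ← two_mul, pow_mul]; norm_num
    have h2 : (2 * (j:ℝ) + 1) ≠ 0 := by positivity
    calc (-1:ℝ) ^ j * (2 * j + 1) * ((-1:ℝ) ^ j * (2 * j + 1)) * (2 * (j:ℝ) + 1)⁻¹
        = (((-1:ℝ)) ^ j * (-1:ℝ) ^ j)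
            * ((2 * (j:ℝ) + 1) * ((2 * (j:ℝ) + 1) * (2 * (j:ℝ) + 1)⁻¹)) := by ring
      _ = 2 * (j:ℝ) + 1 := by rw [h1, mul_inv_cancel₀ h2]; ring
  rw [Finset.sum_congr rfl this, sum_odds]
  push_cast
  ring

lemma icc_to_interval (f : ℝ → ℝ) :
    (∫ u in Set.Icc (0:ℝ) 1, f u) = ∫ x in (0:ℝ)..1, f x := by
  rw [MeasureTheory.integral_Icc_eq_integral_Ioc, ← intervalIntegral.integral_of_le zero_le_one]


/-- `w_m` minimizes the `L₂([0,1])` norm among all kernels of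
order `m` in `𝒲`, and its `L₂` norm equals `m+1`. -/
theorem wKernel_l2_optimal (m : ℕ) (hm : 1 ≤ m) :
    (∫ u in Set.Icc (0:ℝ) 1, wKernel m u ^ 2) ^ ((1:ℝ)/2) = (m : ℝ) + 1 ∧
    ∀ w : ℝ → ℝ, MemW w → OfOrder w m →
      (∫ u in Set.Icc (0:ℝ) 1, wKernel m u ^ 2) ^ ((1:ℝ)/2)
        ≤ (∫ u in Set.Icc (0:ℝ) 1, w u ^ 2) ^ ((1:ℝ)/2) := by
  have hm1 : (0:ℝ) ≤ (m:ℝ) + 1 := by positivity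
  have hI : (∫ u in Set.Icc (0:ℝ) 1, wKernel m u ^ 2) = ((m:ℝ) + 1) ^ 2 := by
    rw [setIntegral_congr_fun measurableSet_Icc
      (g := fun u => (PK m).eval u * (PK m).eval u)
      (fun u hu => by rw [wKernel_eq m hu]; ring)]
    rw [icc_to_interval, PK_sq_integral]
  have hRpow : (((m:ℝ) + 1) ^ 2) ^ ((1:ℝ)/2) = (m:ℝ) + 1 := by
    rw [show (((m:ℝ) + 1) ^ 2) = ((m:ℝ) + 1) ^ (2:ℕ) from rfl, ← Real.rpow_natCast ((m:ℝ)+1) 2,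
      ← Real.rpow_mul hm1]
    norm_num
  constructor
  · rw [hI, hRpow]
  · intro w hw ho
    obtain ⟨⟨Cb, hCb⟩, hsupp, hint1⟩ := hw
    set μ := volume.restrict (Set.Icc (0:ℝ) 1) with hμ
    have hbd : ∀ x, ‖w x‖ ≤ max Cb 0 := by
      intro x
      by_cases hx : x ∈ Set.Icc (0:ℝ) 1
      · exact (hCb x hx).trans (le_max_left _ _)
      · rw [hsupp x hx]; simp
    have hwi : Integrable w μ := by
      by_contra h
      rw [MeasureTheory.integral_undef h] at hint1
      norm_num at hint1
    have hmeas : AEStronglyMeasurable w μ := hwi.aestronglyMeasurable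
    have hmono : ∀ n : ℕ, Integrable (fun u => w u * u ^ n) μ := fun n =>
      Integrable.bdd_mul ((continuous_pow n).integrableOn_Icc) hmeas (Filter.Eventually.of_forall hbd)
    have hwg : Integrable (fun u => w u * (PK m).eval u) μ :=
      Integrable.bdd_mul ((PK m).continuous.integrableOn_Icc) hmeas (Filter.Eventually.of_forall hbd)
    have hww : Integrable (fun u => w u * w u) μ :=
      Integrable.bdd_mul hwi hmeas (Filter.Eventually.of_forall hbd)
    have hgg : Integrable (fun u => (PK m).eval u * (PK m).eval u) μ :=
      ((PK m).continuous.mul (PK m).continuous).integrableOn_Icc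
    have cross : (∫ u in Set.Icc (0:ℝ) 1, w u * (PK m).eval u) = ((m:ℝ) + 1) ^ 2 := by
      have hexp : ∀ u : ℝ, w u * (PK m).eval u
          = ∑ n ∈ Finset.range (m+1), (PK m).coeff n * (w u * u ^ n) := by
        intro u
        rw [eval_eq_sum_range' (PK_natDegree_lt m), Finset.mul_sum]
        exact Finset.sum_congr rfl fun n _ => by ring
      calc (∫ u in Set.Icc (0:ℝ) 1, w u * (PK m).eval u)
          = ∫ u in Set.Icc (0:ℝ) 1,
              ∑ n ∈ Finset.range (m+1), (PK m).coeff n * (w u * u ^ n) :=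
            integral_congr_ae (Filter.Eventually.of_forall hexp)
        _ = ∑ n ∈ Finset.range (m+1), (PK m).coeff n
              * ∫ u in Set.Icc (0:ℝ) 1, w u * u ^ n := by
            rw [integral_finset_sum _ fun n _ => (hmono n).const_mul _]
            exact Finset.sum_congr rfl fun n _ => integral_const_mul _ _
        _ = (PK m).coeff 0 := by
            rw [Finset.sum_eq_single_of_mem 0 (Finset.mem_range.mpr (by omega))]
            · have : (∫ u in Set.Icc (0:ℝ) 1, w u * u ^ 0) = 1 := by
                simpa using hint1
              rw [this, mul_one]
            · intro n hn hn0
              have hn' := Finset.mem_range.mp hn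
              rw [ho n (by omega) (by omega), mul_zero]
        _ = ((m:ℝ) + 1) ^ 2 := by rw [coeff_zero_eq_eval_zero, PK_eval_zero]
    have hnn : (0:ℝ) ≤ ∫ u in Set.Icc (0:ℝ) 1, (w u - (PK m).eval u) ^ 2 :=
      integral_nonneg fun u => sq_nonneg _
    have hexpand : (∫ u in Set.Icc (0:ℝ) 1, (w u - (PK m).eval u) ^ 2)
        = (∫ u in Set.Icc (0:ℝ) 1, w u * w u)
          - 2 * (∫ u in Set.Icc (0:ℝ) 1, w u * (PK m).eval u)
          + ∫ u in Set.Icc (0:ℝ) 1, (PK m).eval u * (PK m).eval u := by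
      have h1 : ∀ u : ℝ, (w u - (PK m).eval u) ^ 2
          = (w u * w u - 2 * (w u * (PK m).eval u)) + (PK m).eval u * (PK m).eval u := by
        intro u; ring
      calc (∫ u in Set.Icc (0:ℝ) 1, (w u - (PK m).eval u) ^ 2)
          = ∫ u in Set.Icc (0:ℝ) 1,
              ((w u * w u - 2 * (w u * (PK m).eval u)) + (PK m).eval u * (PK m).eval u) :=
            integral_congr_ae (Filter.Eventually.of_forall h1)
        _ = (∫ u in Set.Icc (0:ℝ) 1, (w u * w u - 2 * (w u * (PK m).eval u)))
              + ∫ u in Set.Icc (0:ℝ) 1, (PK m).eval u * (PK m).eval u :=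
            integral_add (hww.sub ((hwg.const_mul 2))) hgg
        _ = _ := by
            rw [integral_sub hww (hwg.const_mul 2), integral_const_mul]
    have hgsq : (∫ u in Set.Icc (0:ℝ) 1, (PK m).eval u * (PK m).eval u) = ((m:ℝ)+1)^2 := by
      rw [icc_to_interval, PK_sq_integral]
    have hfinal : ((m:ℝ) + 1) ^ 2 ≤ ∫ u in Set.Icc (0:ℝ) 1, w u ^ 2 := by
      have hsq : (∫ u in Set.Icc (0:ℝ) 1, w u ^ 2)
          = ∫ u in Set.Icc (0:ℝ) 1, w u * w u :=
        integral_congr_ae (Filter.Eventually.of_forall fun u => by ring)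
      rw [hsq]
      rw [hexpand, cross, hgsq] at hnn
      linarith
    rw [hI, hRpow]
    calc ((m:ℝ) + 1) = (((m:ℝ) + 1) ^ 2) ^ ((1:ℝ)/2) := hRpow.symm
      _ ≤ (∫ u in Set.Icc (0:ℝ) 1, w u ^ 2) ^ ((1:ℝ)/2) :=
          Real.rpow_le_rpow (by positivity) hfinal (by norm_num)

end Adaptive
end
end
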